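/- For the partition scenario where E_i = {ω_i} for i = 1,...,n over Ω = {ω_1,...,ω_n}, and the loss L(p,q) = Σ_i f(p_i, q_i) with f the binary KL divergence f(p,q) = p ln(p/q) + (1−p) ln((1−p)/(1−q)), the minimizer p* over the coherent set (the probability simplex) satisfies: ln(p*_i/(1−p*_i)) − ln(q_i/(1−q_i)) is independent of i, provided all q_i ∈ (0,1). -/

import Mathlib

open scoped BigOperators

/-- Binary KL divergence `f(p,q) = p ln(p/q) + (1−p) ln((1−p)/(1−q))`. -/
noncomputable def binKL (p q : ℝ) : ℝ :=
  p * Real.log (p / q) + (1 - p) * Real.log ((1 - p) / (1 - q))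

/-- log odds -/
noncomputable def LO (p : ℝ) : ℝ := Real.log p - Real.log (1 - p)

lemma binKL_expand {q : ℝ} (hq : q ∈ Set.Ioo (0:ℝ) 1) (p : ℝ) :
    binKL p q = p * Real.log p + (1 - p) * Real.log (1 - p)
      - p * Real.log q - (1 - p) * Real.log (1 - q) := by
  obtain ⟨hq0, hq1⟩ := hq
  have hq0' : q ≠ 0 := ne_of_gt hq0
  have hq1' : (1 : ℝ) - q ≠ 0 := ne_of_gt (by linarith)
  unfold binKL
  have h1 : p * Real.log (p / q) = p * Real.log p - p * Real.log q := by
    rcases eq_or_ne p 0 with h | h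
    · simp [h]
    · rw [Real.log_div h hq0']; ring
  have h2 : (1 - p) * Real.log ((1 - p) / (1 - q))
      = (1 - p) * Real.log (1 - p) - (1 - p) * Real.log (1 - q) := by
    rcases eq_or_ne (1 - p) 0 with h | h
    · simp [h]
    · rw [Real.log_div h hq1']; ring
  rw [h1, h2]; ring

lemma continuous_binKL {q : ℝ} (hq : q ∈ Set.Ioo (0:ℝ) 1) :
    Continuous fun p => binKL p q := by
  have : (fun p => binKL p q) = fun p =>
      p * Real.log p + (1 - p) * Real.log (1 - p)
        - p * Real.log q - (1 - p) * Real.log (1 - q) := funext (binKL_expand hq)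
  rw [this]
  have h1 : Continuous fun p : ℝ => p * Real.log p := Real.continuous_mul_log
  have h2 : Continuous fun p : ℝ => (1 - p) * Real.log (1 - p) :=
    Real.continuous_mul_log.comp (continuous_const.sub continuous_id)
  exact ((h1.add h2).sub (continuous_id.mul continuous_const)).sub
    ((continuous_const.sub continuous_id).mul continuous_const)

lemma hasDerivAt_binKL {q : ℝ} (hq : q ∈ Set.Ioo (0:ℝ) 1) {p : ℝ} (hp0 : p ≠ 0) (hp1 : p ≠ 1) :
    HasDerivAt (fun x => binKL x q) (LO p - LO q) p := by
  have hfun : (fun x => binKL x q) = fun x =>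
      x * Real.log x + (1 - x) * Real.log (1 - x)
        - x * Real.log q - (1 - x) * Real.log (1 - q) := funext (binKL_expand hq)
  rw [hfun]
  have h1 : HasDerivAt (fun x : ℝ => x * Real.log x) (Real.log p + 1) p :=
    Real.hasDerivAt_mul_log hp0
  have hinner : HasDerivAt (fun x : ℝ => 1 - x) (-1) p := (hasDerivAt_id p).const_sub 1
  have h2' : HasDerivAt (fun y : ℝ => y * Real.log y) (Real.log (1 - p) + 1) (1 - p) :=
    Real.hasDerivAt_mul_log (sub_ne_zero.mpr (Ne.symm hp1))
  have h2 : HasDerivAt (fun x : ℝ => (1 - x) * Real.log (1 - x))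
      ((Real.log (1 - p) + 1) * (-1)) p := h2'.comp p hinner
  have h3 : HasDerivAt (fun x : ℝ => x * Real.log q) (Real.log q) p := hasDerivAt_mul_const _
  have h4 : HasDerivAt (fun x : ℝ => (1 - x) * Real.log (1 - q)) (-1 * Real.log (1 - q)) p :=
    hinner.mul_const _
  have := ((h1.add h2).sub h3).sub h4
  refine this.congr_deriv ?_
  unfold LO; ring

lemma perturb_min {n : ℕ} (q : Fin n → ℝ) (pstar : Fin n → ℝ)
    (hpos : ∀ k, 0 ≤ pstar k) (hsum : ∑ k, pstar k = 1)
    (hmin : ∀ p : Fin n → ℝ, (∀ k, 0 ≤ p k) → (∑ k, p k) = 1 →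
      (∑ k, binKL (pstar k) (q k)) ≤ ∑ k, binKL (p k) (q k))
    {i j : Fin n} (hij : i ≠ j) (t : ℝ) (h1 : 0 ≤ pstar i + t) (h2 : 0 ≤ pstar j - t) :
    binKL (pstar i) (q i) + binKL (pstar j) (q j) ≤
      binKL (pstar i + t) (q i) + binKL (pstar j - t) (q j) := by
  set p : Fin n → ℝ := fun k => if k = i then pstar i + t else if k = j then pstar j - t else pstar k
    with hp
  have hval : ∀ k, p k = pstar k
      + ((if k = i then t else 0) + (if k = j then -t else 0)) := by
    intro k
    by_cases h : k = i
    · subst h; simp [hp, hij]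
    · by_cases h' : k = j
      · subst h'; simp [hp, h]; ring
      · simp [hp, h, h']
  have hpk : ∀ k, 0 ≤ p k := by
    intro k; rw [hp]
    by_cases h : k = i
    · simpa [h] using h1
    · by_cases h' : k = j
      · subst h'; simpa [h] using h2
      · simp only [hp]; rw [if_neg h, if_neg h']; exact hpos k
  have hsum' : ∑ k, p k = 1 := by
    rw [Finset.sum_congr rfl (fun k _ => hval k), Finset.sum_add_distrib,
      Finset.sum_add_distrib, Finset.sum_ite_eq', Finset.sum_ite_eq', hsum]
    simp
  have hkey := hmin p hpk hsum'
  have hval2 : ∀ k, binKL (p k) (q k) = binKL (pstar k) (q k)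
      + ((if k = i then binKL (pstar i + t) (q i) - binKL (pstar i) (q i) else 0)
        + (if k = j then binKL (pstar j - t) (q j) - binKL (pstar j) (q j) else 0)) := by
    intro k
    by_cases h : k = i
    · subst h; simp [hp, hij]
    · by_cases h' : k = j
      · subst h'; simp [hp, h]
      · simp [hp, h, h']
  have hsum2 : ∑ k, binKL (p k) (q k) = ∑ k, binKL (pstar k) (q k)
      + ((binKL (pstar i + t) (q i) - binKL (pstar i) (q i))
        + (binKL (pstar j - t) (q j) - binKL (pstar j) (q j))) := by
    rw [Finset.sum_congr rfl (fun k _ => hval2 k), Finset.sum_add_distrib,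
      Finset.sum_add_distrib, Finset.sum_ite_eq', Finset.sum_ite_eq']
    simp
  rw [hsum2] at hkey
  linarith
open scoped BigOperators

lemma pstar_pos {n : ℕ} (q : Fin n → ℝ) (hq : ∀ i, q i ∈ Set.Ioo (0:ℝ) 1)
    (pstar : Fin n → ℝ)
    (hpos : ∀ k, 0 ≤ pstar k) (hsum : ∑ k, pstar k = 1)
    (hmin : ∀ p : Fin n → ℝ, (∀ k, 0 ≤ p k) → (∑ k, p k) = 1 →
      (∑ k, binKL (pstar k) (q k)) ≤ ∑ k, binKL (p k) (q k))
    (i : Fin n) : 0 < pstar i := by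
  rcases lt_or_eq_of_le (hpos i) with h | h
  · exact h
  exfalso
  have hi0 : pstar i = 0 := h.symm
  -- find a positive coordinate
  have hex : ∃ j, 0 < pstar j := by
    by_contra hcon
    push_neg at hcon
    have : ∑ k, pstar k ≤ 0 := Finset.sum_nonpos (fun k _ => hcon k)
    rw [hsum] at this; linarith
  obtain ⟨j, hj⟩ := hex
  have hij : i ≠ j := by rintro rfl; rw [hi0] at hj; exact lt_irrefl _ hj
  set a := pstar j with ha
  have ha1 : a ≤ 1 := by
    have := Finset.single_le_sum (fun k _ => hpos k) (Finset.mem_univ j)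
    rw [hsum] at this; exact this
  set h : ℝ → ℝ := fun t => binKL t (q i) + binKL (a - t) (q j) with hh
  have hminh : ∀ t ∈ Set.Icc (0:ℝ) a, h 0 ≤ h t := by
    intro t ht
    have := perturb_min q pstar hpos hsum hmin hij t
      (by rw [hi0, zero_add]; exact ht.1) (by linarith [ht.2])
    rw [hi0] at this
    simpa [hh] using this
  set ψ : ℝ → ℝ := fun c => (Real.log c + Real.log (1 - a + c))
      + (-(Real.log (1 - c)) - Real.log (a - c) - LO (q i) + LO (q j)) with hψ
  have hderiv : ∀ c ∈ Set.Ioo (0:ℝ) a, HasDerivAt h (ψ c) c := by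
    intro c hc
    have hc1 : c < 1 := lt_of_lt_of_le hc.2 ha1
    have h1 : HasDerivAt (fun x => binKL x (q i)) (LO c - LO (q i)) c :=
      hasDerivAt_binKL (hq i) (ne_of_gt hc.1) (ne_of_lt hc1)
    have hac0 : a - c ≠ 0 := ne_of_gt (by linarith [hc.2])
    have hac1 : a - c ≠ 1 := ne_of_lt (by linarith [hc.1])
    have h2' : HasDerivAt (fun x => binKL x (q j)) (LO (a - c) - LO (q j)) (a - c) :=
      hasDerivAt_binKL (hq j) hac0 hac1
    have h2 : HasDerivAt (fun t : ℝ => binKL (a - t) (q j))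
        ((LO (a - c) - LO (q j)) * (-1)) c := h2'.comp c ((hasDerivAt_id c).const_sub a)
    have := h1.add h2
    refine this.congr_deriv ?_
    simp only [hψ, LO]
    rw [show (1:ℝ) - (a - c) = 1 - a + c by ring]
    ring
  have htend : Filter.Tendsto ψ (nhdsWithin 0 (Set.Ioi 0)) Filter.atBot := by
    have hlog : Filter.Tendsto Real.log (nhdsWithin 0 (Set.Ioi 0)) Filter.atBot :=
      Real.tendsto_log_nhdsGT_zero
    have hsecond : Filter.Tendsto (fun c => Real.log c + Real.log (1 - a + c))
        (nhdsWithin 0 (Set.Ioi 0)) Filter.atBot := by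
      rcases eq_or_lt_of_le ha1 with heq | hlt
      · have heq2 : (fun c => Real.log c + Real.log (1 - a + c)) = fun c => (2:ℝ) * Real.log c := by
          funext c; rw [← heq]; norm_num; ring
        rw [heq2]
        exact hlog.const_mul_atBot two_pos
      · have hcont : ContinuousAt (fun c : ℝ => Real.log (1 - a + c)) 0 := by
          apply ContinuousAt.comp (Real.continuousAt_log (by norm_num; linarith))
          exact (continuous_const.add continuous_id).continuousAt
        exact hlog.atBot_add (hcont.tendsto.mono_left nhdsWithin_le_nhds)
    have hrest : Filter.Tendsto
        (fun c => -(Real.log (1 - c)) - Real.log (a - c) - LO (q i) + LO (q j))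
        (nhdsWithin 0 (Set.Ioi 0))
        (nhds (-(Real.log (1 - 0)) - Real.log (a - 0) - LO (q i) + LO (q j))) := by
      have c1 : ContinuousAt (fun c : ℝ => Real.log (1 - c)) 0 := by
        apply ContinuousAt.comp (Real.continuousAt_log (by norm_num))
        exact (continuous_const.sub continuous_id).continuousAt
      have c2 : ContinuousAt (fun c : ℝ => Real.log (a - c)) 0 := by
        apply ContinuousAt.comp (Real.continuousAt_log (by simpa using ne_of_gt hj))
        exact (continuous_const.sub continuous_id).continuousAt
      exact ((((c1.neg.sub c2).sub continuousAt_const).add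
        continuousAt_const).tendsto).mono_left nhdsWithin_le_nhds
    exact hsecond.atBot_add hrest
  have hev : ∀ᶠ c in nhdsWithin 0 (Set.Ioi 0), ψ c < 0 := htend.eventually_lt_atBot 0
  obtain ⟨u, hu, hsub⟩ := mem_nhdsGT_iff_exists_Ioo_subset.mp hev
  set ε : ℝ := min u a / 2 with hε
  have hε0 : 0 < ε := by
    rw [hε]; exact div_pos (lt_min (Set.mem_Ioi.mp hu) hj) two_pos
  have hεu : ε < u := by
    have : min u a ≤ u := min_le_left _ _
    have := hu
    simp only [Set.mem_Ioi] at this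
    calc ε ≤ u / 2 := by rw [hε]; linarith [min_le_left u a]
      _ < u := by linarith
  have hεa : ε ≤ a := by
    calc ε ≤ a / 2 := by rw [hε]; linarith [min_le_right u a]
      _ ≤ a := by linarith [hj]
  have hanti : StrictAntiOn h (Set.Icc 0 ε) := by
    apply strictAntiOn_of_deriv_neg (convex_Icc 0 ε)
    · apply Continuous.continuousOn
      exact (continuous_binKL (hq i)).add
        ((continuous_binKL (hq j)).comp (continuous_const.sub continuous_id))
    · intro c hc
      rw [interior_Icc] at hc
      have hc' : c ∈ Set.Ioo (0:ℝ) a := ⟨hc.1, lt_of_lt_of_le hc.2 hεa⟩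
      rw [(hderiv c hc').deriv]
      exact hsub ⟨hc.1, lt_trans hc.2 hεu⟩
  have h1 : h ε < h 0 :=
    hanti (Set.left_mem_Icc.mpr hε0.le) ⟨hε0.le, le_refl ε⟩ hε0
  have h2 := hminh ε ⟨hε0.le, hεa⟩
  linarith

/-- in the partition scenario (the coherent set is the probability simplex),
the minimizer `p*` of `Σ f(p_i, q_i)` has log-odds differing from those of `q` by a
constant: `ln(p*_i/(1−p*_i)) − ln(q_i/(1−q_i))` is independent of `i`, when all
`q_i ∈ (0,1)`. -/
theorem binKL_partition_minimizer_logodds_shift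
    {n : ℕ} (q : Fin n → ℝ) (hq : ∀ i, q i ∈ Set.Ioo (0:ℝ) 1)
    (C : Set (Fin n → ℝ))
    (hC : C = {p | (∀ i, 0 ≤ p i) ∧ (∑ i, p i) = 1})
    (pstar : Fin n → ℝ) (hmem : pstar ∈ C)
    (hmin : IsMinOn (fun p : Fin n → ℝ => ∑ i, binKL (p i) (q i)) C pstar) :
    ∀ i i' : Fin n,
      Real.log (pstar i / (1 - pstar i)) - Real.log (q i / (1 - q i)) =
        Real.log (pstar i' / (1 - pstar i')) - Real.log (q i' / (1 - q i')) := by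
  intro i i'
  rcases eq_or_ne i i' with rfl | hii
  · rfl
  subst hC
  obtain ⟨hpos, hsum⟩ := hmem
  have hmin' : ∀ p : Fin n → ℝ, (∀ k, 0 ≤ p k) → (∑ k, p k) = 1 →
      (∑ k, binKL (pstar k) (q k)) ≤ ∑ k, binKL (p k) (q k) := by
    intro p h1 h2
    exact isMinOn_iff.mp hmin p ⟨h1, h2⟩
  have hp : ∀ k, 0 < pstar k := pstar_pos q hq pstar hpos hsum hmin'
  have hpair : pstar i + pstar i' ≤ 1 := by
    have h1 : ∑ k ∈ ({i, i'} : Finset (Fin n)), pstar k ≤ ∑ k, pstar k :=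
      Finset.sum_le_sum_of_subset_of_nonneg (Finset.subset_univ _) (fun k _ _ => hpos k)
    rw [Finset.sum_pair hii, hsum] at h1
    exact h1
  have hpi1 : pstar i < 1 := by linarith [hp i']
  have hpi'1 : pstar i' < 1 := by linarith [hp i]
  set δ : ℝ := min (pstar i) (pstar i') with hδ
  have hδ0 : 0 < δ := lt_min (hp i) (hp i')
  set h : ℝ → ℝ := fun t => binKL (pstar i + t) (q i) + binKL (pstar i' - t) (q i') with hh
  have hlocal : IsLocalMin h 0 := by
    have hball : Set.Ioo (-δ) δ ∈ nhds (0:ℝ) := Ioo_mem_nhds (by linarith) hδ0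
    have hev : ∀ᶠ t in nhds (0:ℝ), h 0 ≤ h t := by
      filter_upwards [hball] with t ht
      have h1 : 0 ≤ pstar i + t := by
        have := ht.1
        have := min_le_left (pstar i) (pstar i')
        simp only [hδ] at *
        linarith
      have h2 : 0 ≤ pstar i' - t := by
        have := ht.2
        have := min_le_right (pstar i) (pstar i')
        simp only [hδ] at *
        linarith
      have := perturb_min q pstar hpos hsum hmin' hii t h1 h2
      simpa [hh] using this
    exact hev
  have h1 : HasDerivAt (fun t : ℝ => binKL (pstar i + t) (q i))
      ((LO (pstar i + 0) - LO (q i)) * 1) 0 :=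
    (hasDerivAt_binKL (hq i) (by rw [add_zero]; exact ne_of_gt (hp i))
      (by rw [add_zero]; exact ne_of_lt hpi1)).comp 0 ((hasDerivAt_id 0).const_add (pstar i))
  have h2 : HasDerivAt (fun t : ℝ => binKL (pstar i' - t) (q i'))
      ((LO (pstar i' - 0) - LO (q i')) * (-1)) 0 :=
    (hasDerivAt_binKL (hq i') (by rw [sub_zero]; exact ne_of_gt (hp i'))
      (by rw [sub_zero]; exact ne_of_lt hpi'1)).comp 0 ((hasDerivAt_id 0).const_sub (pstar i'))
  have hD := h1.add h2
  have h0 := hlocal.hasDerivAt_eq_zero hD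
  rw [add_zero, sub_zero] at h0
  have key : LO (pstar i) - LO (q i) = LO (pstar i') - LO (q i') := by linarith
  have e : ∀ x : ℝ, 0 < x → x < 1 → Real.log (x / (1 - x)) = LO x := by
    intro x hx1 hx2
    unfold LO
    rw [Real.log_div (ne_of_gt hx1) (ne_of_gt (by linarith))]
  rw [e _ (hp i) hpi1, e _ (hp i') hpi'1, e _ (hq i).1 (hq i).2, e _ (hq i').1 (hq i').2]
  exact key
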